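/- Let S be a finite set and let y = (y_T) be a family of nonnegative real numbers indexed by the nonempty subsets T ⊆ S. Then the Minkowski sum Σ_{∅ ≠ T ⊆ S} y_T · Δ_T of dilated faces of the standard simplex equals the set {x ∈ ℝ^S : Σ_{s ∈ S} x_s = z_S and Σ_{r ∈ R} x_r ≥ z_R for all nonempty R ⊆ S}, where z_R = Σ_{∅ ≠ T ⊆ R} y_T. -/
import Mathlib

open Pointwise

/-- The face `Δ_T = conv{e_t : t ∈ T}` of the standard simplex in `ℝ^α`. -/
noncomputable def simplexFace {α : Type*} [DecidableEq α] (T : Finset α) :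
    Set (α → ℝ) :=
  convexHull ℝ {x : α → ℝ | ∃ t ∈ T, x = Pi.single t 1}

section Aux

variable {α : Type*} [Fintype α] [DecidableEq α]

lemma mem_simplexFace {T : Finset α} (hT : T.Nonempty) {x : α → ℝ} :
    x ∈ simplexFace T ↔ (∀ s, 0 ≤ x s) ∧ (∀ s ∉ T, x s = 0) ∧ ∑ s, x s = 1 := by
  constructor
  · intro hx
    have hconv : Convex ℝ {x : α → ℝ | (∀ s, 0 ≤ x s) ∧ (∀ s ∉ T, x s = 0) ∧ ∑ s, x s = 1} := by
      rintro u ⟨hu0, hus, hu1⟩ v ⟨hv0, hvs, hv1⟩ a b ha hb hab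
      refine ⟨fun s => add_nonneg (mul_nonneg ha (hu0 s)) (mul_nonneg hb (hv0 s)),
        fun s hs => by simp [hus s hs, hvs s hs], ?_⟩
      simp only [Pi.add_apply, Pi.smul_apply, smul_eq_mul]
      rw [Finset.sum_add_distrib, ← Finset.mul_sum, ← Finset.mul_sum, hu1, hv1]
      simpa using hab
    refine convexHull_min ?_ hconv hx
    rintro _ ⟨t, ht, rfl⟩
    refine ⟨fun s => ?_, fun s hs => ?_, ?_⟩
    · rw [Pi.single_apply]; split <;> norm_num
    · rw [Pi.single_apply, if_neg]; exact fun h => hs (h ▸ ht)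
    · simp [Pi.single_apply]
  · rintro ⟨h0, hsupp, hsum⟩
    have hTsum : ∑ t ∈ T, x t = 1 := by
      rw [← hsum]
      exact Finset.sum_subset (Finset.subset_univ T) fun s _ hs => hsupp s hs
    have hmem := Finset.centerMass_mem_convexHull
      (s := {z : α → ℝ | ∃ t ∈ T, z = Pi.single t 1}) T
      (w := fun t => x t) (z := fun t => Pi.single t (1:ℝ))
      (fun t _ => h0 t) (by rw [hTsum]; norm_num) (fun t ht => ⟨t, ht, rfl⟩)
    rw [Finset.centerMass_eq_of_sum_1 _ _ hTsum] at hmem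
    have hxeq : (∑ t ∈ T, x t • (Pi.single t (1:ℝ) : α → ℝ)) = x := ?_
    · rwa [hxeq] at hmem
    funext s
    rw [Finset.sum_apply]
    by_cases hs : s ∈ T
    · rw [Finset.sum_eq_single s (fun t _ hts => by
        simp [Pi.single_apply, Ne.symm hts]) (fun h => absurd hs h)]
      simp
    · rw [Finset.sum_eq_zero, hsupp s hs]
      intro t htT
      have : s ≠ t := fun h => hs (h ▸ htT)
      simp [Pi.single_apply, this]

lemma mem_smul_simplexFace {T : Finset α} (hT : T.Nonempty) {c : ℝ} (hc : 0 ≤ c) {p : α → ℝ} :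
    p ∈ c • simplexFace T ↔ (∀ s, 0 ≤ p s) ∧ (∀ s ∉ T, p s = 0) ∧ ∑ s, p s = c := by
  rcases eq_or_lt_of_le hc with hc0 | hcpos
  · obtain ⟨t, ht⟩ := hT
    have hne : (simplexFace T).Nonempty :=
      ⟨Pi.single t 1, subset_convexHull ℝ _ ⟨t, ht, rfl⟩⟩
    rw [← hc0, Set.zero_smul_set hne]
    constructor
    · rintro h
      have hp : p = 0 := h
      subst hp
      exact ⟨fun s => le_refl 0, fun s _ => rfl, by simp⟩
    · rintro ⟨hp0, -, hpsum⟩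
      have : ∀ s ∈ Finset.univ, p s = 0 :=
        (Finset.sum_eq_zero_iff_of_nonneg (fun s _ => hp0 s)).mp hpsum
      have : p = 0 := funext fun s => this s (Finset.mem_univ s)
      simp [this]
  · rw [Set.mem_smul_set]
    constructor
    · rintro ⟨q, hq, rfl⟩
      rw [mem_simplexFace hT] at hq
      obtain ⟨hq0, hqs, hq1⟩ := hq
      refine ⟨fun s => mul_nonneg hc (hq0 s), fun s hs => by simp [hqs s hs], ?_⟩
      simp only [Pi.smul_apply, smul_eq_mul, ← Finset.mul_sum, hq1, mul_one]
    · rintro ⟨hp0, hps, hpc⟩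
      refine ⟨c⁻¹ • p, ?_, ?_⟩
      · rw [mem_simplexFace hT]
        exact ⟨fun s => mul_nonneg (inv_nonneg.mpr hc) (hp0 s),
          fun s hs => by simp [hps s hs],
          by simp only [Pi.smul_apply, smul_eq_mul, ← Finset.mul_sum, hpc];
             field_simp⟩
      · rw [smul_smul, mul_inv_cancel₀ hcpos.ne', one_smul]

end Aux

section Aux2
variable {α : Type*} [Fintype α] [DecidableEq α]

/-- Greedy construction for a monotone submodular function. -/
lemma greedy_exists (h : Finset α → ℝ)
    (hmono : ∀ ⦃A B : Finset α⦄, A ⊆ B → h A ≤ h B)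
    (hsub : ∀ A B : Finset α, h (A ∪ B) + h (A ∩ B) ≤ h A + h B)
    (h0 : h ∅ = 0) (T : Finset α) :
    ∃ p : α → ℝ, (∀ s, 0 ≤ p s) ∧ (∀ s ∉ T, p s = 0) ∧
      (∑ t ∈ T, p t = h T) ∧ ∀ A ⊆ T, ∑ a ∈ A, p a ≤ h A := by
  induction T using Finset.induction_on with
  | empty =>
    refine ⟨0, fun s => le_refl 0, fun s _ => rfl, by simp [h0], ?_⟩
    intro A hA
    rw [Finset.subset_empty.mp hA]
    simp [h0]
  | @insert t T htT ih =>
    obtain ⟨p, hp0, hpsupp, hpsum, hpA⟩ := ih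
    set d : ℝ := h (insert t T) - h T with hd
    have hd0 : 0 ≤ d := sub_nonneg.mpr (hmono (Finset.subset_insert t T))
    refine ⟨Function.update p t d, ?_, ?_, ?_, ?_⟩
    · intro s
      rcases eq_or_ne s t with rfl | hst
      · simpa using hd0
      · rw [Function.update_of_ne hst]; exact hp0 s
    · intro s hs
      have hst : s ≠ t := fun h => hs (by rw [h]; exact Finset.mem_insert_self t T)
      rw [Function.update_of_ne hst]
      exact hpsupp s fun h => hs (Finset.mem_insert_of_mem h)
    · rw [Finset.sum_insert htT, Function.update_self,
        Finset.sum_congr rfl (fun s hs => Function.update_of_ne (ne_of_mem_of_not_mem hs htT) d p),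
        hpsum]
      ring
    · intro A hA
      by_cases htA : t ∈ A
      · have hAT : A.erase t ⊆ T := fun s hs => by
          have h1 := Finset.mem_of_mem_erase hs
          have h2 := Finset.ne_of_mem_erase hs
          rcases Finset.mem_insert.mp (hA h1) with h | h
          · exact absurd h h2
          · exact h
        have hunion : A ∪ T = insert t T := by
          apply Finset.Subset.antisymm
          · intro s hs
            rcases Finset.mem_union.mp hs with h | h
            · exact hA h
            · exact Finset.mem_insert_of_mem h
          · intro s hs
            rcases Finset.mem_insert.mp hs with rfl | h
            · exact Finset.mem_union_left _ htA
            · exact Finset.mem_union_right _ h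
        have hinter : A ∩ T = A.erase t := by
          ext s
          simp only [Finset.mem_inter, Finset.mem_erase]
          constructor
          · rintro ⟨h1, h2⟩
            exact ⟨fun h => htT (h ▸ h2), h1⟩
          · rintro ⟨h1, h2⟩
            rcases Finset.mem_insert.mp (hA h2) with h | h
            · exact absurd h h1
            · exact ⟨h2, h⟩
        have hkey := hsub A T
        rw [hunion, hinter] at hkey
        have : A = insert t (A.erase t) := (Finset.insert_erase htA).symm
        rw [this, Finset.sum_insert (Finset.notMem_erase t A), Function.update_self,
          Finset.sum_congr rfl
            (fun s hs => Function.update_of_ne (Finset.ne_of_mem_erase hs) d p)]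
        have h1 := hpA _ hAT
        rw [← this]
        linarith
      · have hAT : A ⊆ T := fun s hs => by
          rcases Finset.mem_insert.mp (hA hs) with rfl | h
          · exact absurd hs htA
          · exact h
        rw [Finset.sum_congr rfl
          (fun s hs => Function.update_of_ne (ne_of_mem_of_not_mem hs (fun c => htT (hAT c))) d p)]
        exact hpA A hAT

/-- refined supermodularity of `z`. -/
lemma z_refined (y : Finset α → ℝ) (hy : ∀ T : Finset α, T.Nonempty → 0 ≤ y T)
    (T₀ : Finset α) (hT₀ : T₀.Nonempty) (P Q : Finset α) :
    (∑ T ∈ P.powerset.filter Finset.Nonempty, y T)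
      + (∑ T ∈ Q.powerset.filter Finset.Nonempty, y T)
      + (if T₀ ⊆ P ∪ Q then y T₀ else 0) + (if T₀ ⊆ P ∩ Q then y T₀ else 0)
    ≤ (∑ T ∈ (P ∪ Q).powerset.filter Finset.Nonempty, y T)
      + (∑ T ∈ (P ∩ Q).powerset.filter Finset.Nonempty, y T)
      + (if T₀ ⊆ P then y T₀ else 0) + (if T₀ ⊆ Q then y T₀ else 0) := by
  classical
  set PS : Finset α → Finset (Finset α) := fun R => R.powerset.filter Finset.Nonempty with hPS
  have hmono : ∀ {A B : Finset α}, A ⊆ B → PS A ⊆ PS B := by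
    intro A B hAB
    exact Finset.filter_subset_filter _ (Finset.powerset_mono.mpr hAB)
  set big : Finset (Finset α) := PS (P ∪ Q) \ PS P with hbig
  set small : Finset (Finset α) := PS Q \ PS (P ∩ Q) with hsmall
  have hPsub : PS P ⊆ PS (P ∪ Q) := hmono Finset.subset_union_left
  have hQsub : PS (P ∩ Q) ⊆ PS Q := hmono Finset.inter_subset_right
  have hbigeq : (∑ T ∈ big, y T) + (∑ T ∈ PS P, y T) = ∑ T ∈ PS (P ∪ Q), y T :=
    Finset.sum_sdiff hPsub
  have hsmalleq : (∑ T ∈ small, y T) + (∑ T ∈ PS (P ∩ Q), y T) = ∑ T ∈ PS Q, y T :=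
    Finset.sum_sdiff hQsub
  have hss : small ⊆ big := by
    intro T hT
    simp only [hsmall, hbig, hPS, Finset.mem_sdiff, Finset.mem_filter, Finset.mem_powerset] at *
    obtain ⟨⟨hTQ, hTne⟩, hnot⟩ := hT
    refine ⟨⟨hTQ.trans Finset.subset_union_right, hTne⟩, ?_⟩
    intro ⟨hTP, _⟩
    exact hnot ⟨Finset.subset_inter hTP hTQ, hTne⟩
  have hbignn : ∀ T ∈ big, 0 ≤ y T := by
    intro T hT
    simp only [hbig, hPS, Finset.mem_sdiff, Finset.mem_filter] at hT
    exact hy T hT.1.2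
  have key : (∑ T ∈ small, y T) + (if T₀ ⊆ P ∪ Q then y T₀ else 0)
      + (if T₀ ⊆ P ∩ Q then y T₀ else 0)
      ≤ (∑ T ∈ big, y T) + (if T₀ ⊆ P then y T₀ else 0) + (if T₀ ⊆ Q then y T₀ else 0) := by
    have h1 : (∑ T ∈ small, y T) ≤ ∑ T ∈ big, y T :=
      Finset.sum_le_sum_of_subset_of_nonneg hss fun T hT _ => hbignn T hT
    by_cases hP : T₀ ⊆ P
    · by_cases hQ : T₀ ⊆ Q
      · rw [if_pos hP, if_pos hQ, if_pos (hP.trans Finset.subset_union_left),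
          if_pos (Finset.subset_inter hP hQ)]
        linarith
      · rw [if_pos hP, if_neg hQ, if_pos (hP.trans Finset.subset_union_left),
          if_neg (fun c => hQ (c.trans Finset.inter_subset_right))]
        linarith
    · by_cases hQ : T₀ ⊆ Q
      · rw [if_neg hP, if_pos hQ, if_pos (hQ.trans Finset.subset_union_right),
          if_neg (fun c => hP (c.trans Finset.inter_subset_left))]
        linarith
      · rw [if_neg hP, if_neg hQ]
        by_cases hU : T₀ ⊆ P ∪ Q
        · rw [if_pos hU, if_neg (fun c => hP (c.trans Finset.inter_subset_left))]
          have hT₀big : T₀ ∈ big := by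
            simp only [hbig, hPS, Finset.mem_sdiff, Finset.mem_filter, Finset.mem_powerset]
            exact ⟨⟨hU, hT₀⟩, fun h => hP h.1⟩
          have hT₀small : T₀ ∉ small := by
            simp only [hsmall, hPS, Finset.mem_sdiff, Finset.mem_filter, Finset.mem_powerset]
            intro ⟨⟨h1, _⟩, _⟩
            exact hQ h1
          have hsub2 : insert T₀ small ⊆ big := Finset.insert_subset hT₀big hss
          have h2 : (∑ T ∈ insert T₀ small, y T) ≤ ∑ T ∈ big, y T :=
            Finset.sum_le_sum_of_subset_of_nonneg hsub2 fun T hT _ => hbignn T hT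
          rw [Finset.sum_insert hT₀small] at h2
          linarith
        · rw [if_neg hU, if_neg (fun c => hP (c.trans Finset.inter_subset_left))]
          linarith
  linarith

lemma exchange (x : α → ℝ) (y : Finset α → ℝ)
    (hy : ∀ T : Finset α, T.Nonempty → 0 ≤ y T)
    (hx : ∀ R : Finset α, R.Nonempty →
      (∑ T ∈ R.powerset.filter Finset.Nonempty, y T) ≤ ∑ r ∈ R, x r)
    (T₀ : Finset α) (hT₀ : T₀.Nonempty) (hy₀ : 0 < y T₀) :
    ∃ p : α → ℝ, (∀ s, 0 ≤ p s) ∧ (∀ s ∉ T₀, p s = 0) ∧ (∑ s, p s = y T₀) ∧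
      ∀ R : Finset α, (∑ r ∈ R, p r) ≤ (∑ r ∈ R, x r)
        - (∑ T ∈ R.powerset.filter Finset.Nonempty, y T)
        + (if T₀ ⊆ R then y T₀ else 0) := by
  classical
  set F : Finset α → ℝ := fun R => (∑ r ∈ R, x r)
    - (∑ T ∈ R.powerset.filter Finset.Nonempty, y T)
    + (if T₀ ⊆ R then y T₀ else 0) with hF
  have hzempty : (∑ T ∈ (∅ : Finset α).powerset.filter Finset.Nonempty, y T) = 0 := by
    rw [Finset.powerset_empty]
    simp [Finset.filter_singleton]
  have hFempty : F ∅ = 0 := by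
    rw [hF]
    simp only [Finset.sum_empty, hzempty]
    rw [if_neg (fun c => hT₀.ne_empty (Finset.subset_empty.mp c))]
    ring
  have hindnn : ∀ R : Finset α, (0:ℝ) ≤ if T₀ ⊆ R then y T₀ else 0 := by
    intro R; split
    · exact hy₀.le
    · exact le_refl 0
  have hF0 : ∀ R, 0 ≤ F R := by
    intro R
    rcases R.eq_empty_or_nonempty with rfl | hR
    · rw [hFempty]
    · have h1 := hx R hR
      have h2 := hindnn R
      rw [hF]
      dsimp only
      linarith
  have hFsub : ∀ P Q : Finset α, F (P ∪ Q) + F (P ∩ Q) ≤ F P + F Q := by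
    intro P Q
    have h1 := z_refined y hy T₀ hT₀ P Q
    have h2 : (∑ r ∈ P ∪ Q, x r) + (∑ r ∈ P ∩ Q, x r) = (∑ r ∈ P, x r) + ∑ r ∈ Q, x r :=
      Finset.sum_union_inter
    rw [hF]
    dsimp only
    linarith
  -- the "monotone closure" of F
  set coll : Finset α → Finset (Finset α) := fun A => Finset.univ.filter (fun R => A ⊆ R)
    with hcolldef
  have hcollmem : ∀ A R : Finset α, R ∈ coll A ↔ A ⊆ R := by
    intro A R
    simp [hcolldef]
  have hcollne : ∀ A : Finset α, (coll A).Nonempty :=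
    fun A => ⟨Finset.univ, (hcollmem A _).mpr (Finset.subset_univ A)⟩
  set h : Finset α → ℝ := fun A => (coll A).inf' (hcollne A) F with hh
  have hinfle : ∀ (A R : Finset α), A ⊆ R → h A ≤ F R := by
    intro A R hAR
    exact Finset.inf'_le F ((hcollmem A R).mpr hAR)
  have hmono : ∀ ⦃A B : Finset α⦄, A ⊆ B → h A ≤ h B := by
    intro A B hAB
    obtain ⟨R, hR, hEq⟩ := Finset.exists_mem_eq_inf' (hcollne B) F
    have hBR : h B = F R := hEq
    rw [hBR]
    exact hinfle A R (hAB.trans ((hcollmem B R).mp hR))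
  have hsubm : ∀ A B : Finset α, h (A ∪ B) + h (A ∩ B) ≤ h A + h B := by
    intro A B
    obtain ⟨RA, hRA, hEqA⟩ := Finset.exists_mem_eq_inf' (hcollne A) F
    obtain ⟨RB, hRB, hEqB⟩ := Finset.exists_mem_eq_inf' (hcollne B) F
    have hA : A ⊆ RA := (hcollmem A RA).mp hRA
    have hB : B ⊆ RB := (hcollmem B RB).mp hRB
    have e1 : h (A ∪ B) ≤ F (RA ∪ RB) :=
      hinfle _ _ (Finset.union_subset_union hA hB)
    have e2 : h (A ∩ B) ≤ F (RA ∩ RB) :=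
      hinfle _ _ (Finset.inter_subset_inter hA hB)
    have e3 := hFsub RA RB
    have e4 : h A = F RA := hEqA
    have e5 : h B = F RB := hEqB
    linarith
  have hzero : h ∅ = 0 := by
    apply le_antisymm
    · rw [← hFempty]
      exact hinfle ∅ ∅ (le_refl _)
    · exact Finset.le_inf' _ _ (fun R _ => hF0 R)
  have hT₀le : y T₀ ≤ h T₀ := by
    apply Finset.le_inf'
    intro R hR
    have hTR : T₀ ⊆ R := (hcollmem T₀ R).mp hR
    have hRne : R.Nonempty := hT₀.mono hTR
    have h1 := hx R hRne
    rw [hF]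
    dsimp only
    rw [if_pos hTR]
    linarith
  have hhpos : 0 < h T₀ := lt_of_lt_of_le hy₀ hT₀le
  obtain ⟨q, hq0, hqsupp, hqsum, hqA⟩ := greedy_exists h hmono hsubm hzero T₀
  set c : ℝ := y T₀ / h T₀ with hc
  have hc0 : 0 ≤ c := div_nonneg hy₀.le hhpos.le
  have hc1 : c ≤ 1 := (div_le_one hhpos).mpr hT₀le
  refine ⟨fun s => c * q s, fun s => mul_nonneg hc0 (hq0 s),
    fun s hs => by show c * q s = 0; rw [hqsupp s hs, mul_zero], ?_, ?_⟩
  · rw [← Finset.sum_subset (Finset.subset_univ T₀)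
      (fun s _ hs => by show c * q s = 0; rw [hqsupp s hs, mul_zero])]
    rw [← Finset.mul_sum, hqsum, hc]
    field_simp
  · intro R
    have hstep : (∑ r ∈ R, c * q r) = ∑ r ∈ R ∩ T₀, c * q r := by
      refine (Finset.sum_subset Finset.inter_subset_left ?_).symm
      intro s hsR hs
      have : s ∉ T₀ := fun c' => hs (Finset.mem_inter.mpr ⟨hsR, c'⟩)
      rw [hqsupp s this, mul_zero]
    have h1 : (∑ r ∈ R ∩ T₀, q r) ≤ h (R ∩ T₀) := hqA _ Finset.inter_subset_right
    have h2 : h (R ∩ T₀) ≤ F R := hinfle _ _ Finset.inter_subset_left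
    have h3 : (∑ r ∈ R ∩ T₀, c * q r) ≤ ∑ r ∈ R ∩ T₀, q r := by
      rw [← Finset.mul_sum]
      exact mul_le_of_le_one_left (Finset.sum_nonneg (fun s _ => hq0 s)) hc1
    have := hstep ▸ (h3.trans (h1.trans h2))
    rw [hF] at this
    exact this

end Aux2

lemma perm_subset_sum {α : Type*} [Fintype α] [DecidableEq α] :
    ∀ (n : ℕ) (y : Finset α → ℝ), (∀ T : Finset α, T.Nonempty → 0 ≤ y T) →
    (Finset.univ.powerset.filter (fun T : Finset α => T.Nonempty ∧ y T ≠ 0)).card = n →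
    ∀ x : α → ℝ,
      ((∑ s : α, x s) = ∑ T ∈ Finset.univ.powerset.filter Finset.Nonempty, y T) →
      (∀ R : Finset α, R.Nonempty →
        (∑ T ∈ R.powerset.filter Finset.Nonempty, y T) ≤ ∑ r ∈ R, x r) →
      x ∈ ∑ T ∈ Finset.univ.powerset.filter Finset.Nonempty, y T • simplexFace T := by
  classical
  intro n
  induction n with
  | zero =>
    intro y hy hcard x heq hineq
    have hfil : Finset.univ.powerset.filter (fun T : Finset α => T.Nonempty ∧ y T ≠ 0) = ∅ :=
      Finset.card_eq_zero.mp hcard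
    have hy0 : ∀ T : Finset α, T.Nonempty → y T = 0 := by
      intro T hT
      by_contra hne
      have : T ∈ Finset.univ.powerset.filter (fun T : Finset α => T.Nonempty ∧ y T ≠ 0) := by
        simp only [Finset.mem_filter, Finset.mem_powerset]
        exact ⟨Finset.subset_univ T, hT, hne⟩
      rw [hfil] at this
      exact absurd this (Finset.notMem_empty T)
    have hx0 : ∀ s, 0 ≤ x s := by
      intro s
      have h1 := hineq {s} (Finset.singleton_nonempty s)
      rw [Finset.sum_singleton] at h1
      have h2 : (∑ T ∈ ({s} : Finset α).powerset.filter Finset.Nonempty, y T) = 0 :=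
        Finset.sum_eq_zero fun T hT => hy0 T (Finset.mem_filter.mp hT).2
      linarith
    have hxtot : (∑ s : α, x s) = 0 := by
      rw [heq]
      exact Finset.sum_eq_zero fun T hT => hy0 T (Finset.mem_filter.mp hT).2
    have hx : x = 0 := by
      funext s
      exact (Finset.sum_eq_zero_iff_of_nonneg (fun s _ => hx0 s)).mp hxtot s
        (Finset.mem_univ s)
    have hsum0 : (∑ T ∈ Finset.univ.powerset.filter Finset.Nonempty,
        y T • simplexFace T) = 0 := by
      apply Finset.sum_eq_zero
      intro T hT
      have hTne : T.Nonempty := (Finset.mem_filter.mp hT).2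
      obtain ⟨t, ht⟩ := hTne
      have hne : (simplexFace T).Nonempty :=
        ⟨Pi.single t 1, subset_convexHull ℝ _ ⟨t, ht, rfl⟩⟩
      rw [hy0 T ⟨t, ht⟩, Set.zero_smul_set hne]
    rw [hsum0, hx]
    exact Set.zero_mem_zero
  | succ n ih =>
    intro y hy hcard x heq hineq
    have hne : (Finset.univ.powerset.filter
        (fun T : Finset α => T.Nonempty ∧ y T ≠ 0)).Nonempty :=
      Finset.card_pos.mp (by rw [hcard]; exact Nat.succ_pos n)
    obtain ⟨T₀, hT₀mem⟩ := hne
    have hT₀ : T₀.Nonempty := (Finset.mem_filter.mp hT₀mem).2.1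
    have hyT₀ : y T₀ ≠ 0 := (Finset.mem_filter.mp hT₀mem).2.2
    have hy₀ : 0 < y T₀ := lt_of_le_of_ne (hy T₀ hT₀) (Ne.symm hyT₀)
    obtain ⟨p, hp0, hpsupp, hpsum, hpR⟩ := exchange x y hy hineq T₀ hT₀ hy₀
    set y' : Finset α → ℝ := Function.update y T₀ 0 with hy'def
    have hy' : ∀ T : Finset α, T.Nonempty → 0 ≤ y' T := by
      intro T hT
      rcases eq_or_ne T T₀ with rfl | hne
      · rw [hy'def, Function.update_self]
      · rw [hy'def, Function.update_of_ne hne]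
        exact hy T hT
    have hT₀TT : T₀ ∈ Finset.univ.powerset.filter Finset.Nonempty := by
      simp only [Finset.mem_filter, Finset.mem_powerset]
      exact ⟨Finset.subset_univ T₀, hT₀⟩
    have hcard' : (Finset.univ.powerset.filter
        (fun T : Finset α => T.Nonempty ∧ y' T ≠ 0)).card = n := by
      have hfil : Finset.univ.powerset.filter (fun T : Finset α => T.Nonempty ∧ y' T ≠ 0)
          = (Finset.univ.powerset.filter
              (fun T : Finset α => T.Nonempty ∧ y T ≠ 0)).erase T₀ := by
        ext T
        simp only [Finset.mem_filter, Finset.mem_powerset, Finset.mem_erase]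
        constructor
        · rintro ⟨h1, h2, h3⟩
          rcases eq_or_ne T T₀ with rfl | hne
          · rw [hy'def, Function.update_self] at h3
            exact absurd rfl h3
          · rw [hy'def, Function.update_of_ne hne] at h3
            exact ⟨hne, h1, h2, h3⟩
        · rintro ⟨hne, h1, h2, h3⟩
          rw [hy'def] at *
          exact ⟨h1, h2, by rwa [Function.update_of_ne hne]⟩
      rw [hfil, Finset.card_erase_of_mem (by
        simp only [Finset.mem_filter, Finset.mem_powerset]
        exact ⟨Finset.subset_univ T₀, hT₀, hyT₀⟩), hcard]
      omega
    -- new z-values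
    have hzval : ∀ R : Finset α,
        (∑ T ∈ R.powerset.filter Finset.Nonempty, y' T)
          = (∑ T ∈ R.powerset.filter Finset.Nonempty, y T)
            - (if T₀ ⊆ R then y T₀ else 0) := by
      intro R
      by_cases hTR : T₀ ⊆ R
      · rw [if_pos hTR]
        have hmem : T₀ ∈ R.powerset.filter Finset.Nonempty := by
          simp only [Finset.mem_filter, Finset.mem_powerset]
          exact ⟨hTR, hT₀⟩
        rw [Finset.sum_update_of_mem hmem, Finset.sdiff_singleton_eq_erase,
          ← Finset.add_sum_erase _ y hmem]
        ring
      · rw [if_neg hTR, sub_zero]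
        apply Finset.sum_congr rfl
        intro T hT
        have hTsub : T ⊆ R := Finset.mem_powerset.mp (Finset.mem_filter.mp hT).1
        have hne : T ≠ T₀ := fun c => hTR (c ▸ hTsub)
        rw [hy'def, Function.update_of_ne hne]
    have heq' : (∑ s : α, (x - p) s)
        = ∑ T ∈ Finset.univ.powerset.filter Finset.Nonempty, y' T := by
      have h1 : (∑ s : α, (x - p) s) = (∑ s : α, x s) - ∑ s : α, p s := by
        simp [Finset.sum_sub_distrib]
      rw [h1, hpsum, heq, hzval Finset.univ, if_pos (Finset.subset_univ T₀)]
    have hineq' : ∀ R : Finset α, R.Nonempty →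
        (∑ T ∈ R.powerset.filter Finset.Nonempty, y' T) ≤ ∑ r ∈ R, (x - p) r := by
      intro R hR
      have h1 := hpR R
      have h2 : (∑ r ∈ R, (x - p) r) = (∑ r ∈ R, x r) - ∑ r ∈ R, p r := by
        simp [Finset.sum_sub_distrib]
      rw [h2, hzval R]
      linarith
    have hih := ih y' hy' hcard' (x - p) heq' hineq'
    have hpmem : p ∈ y T₀ • simplexFace T₀ :=
      (mem_smul_simplexFace hT₀ hy₀.le).mpr ⟨hp0, hpsupp, hpsum⟩
    have hsplit : (∑ T ∈ Finset.univ.powerset.filter Finset.Nonempty, y' T • simplexFace T)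
        = ∑ T ∈ (Finset.univ.powerset.filter Finset.Nonempty).erase T₀,
            y T • simplexFace T := by
      rw [← Finset.add_sum_erase _ (fun T => y' T • simplexFace T) hT₀TT]
      have h0 : y' T₀ • simplexFace T₀ = 0 := by
        obtain ⟨t, ht⟩ := hT₀
        have hne : (simplexFace T₀).Nonempty :=
          ⟨Pi.single t 1, subset_convexHull ℝ _ ⟨t, ht, rfl⟩⟩
        rw [hy'def, Function.update_self, Set.zero_smul_set hne]
      rw [h0, zero_add]
      apply Finset.sum_congr rfl
      intro T hT
      rw [hy'def, Function.update_of_ne (Finset.ne_of_mem_erase hT)]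
    have hxeq : x = p + (x - p) := by ring
    rw [← Finset.add_sum_erase _ (fun T => y T • simplexFace T) hT₀TT, hxeq]
    exact Set.add_mem_add hpmem (hsplit ▸ hih)

/-- For nonnegative dilation factors `y = (y_T)` indexed by the nonempty
subsets `T` of a finite set `α`, the Minkowski sum `Σ_{∅ ≠ T ⊆ α} y_T Δ_T` of
dilated faces of the standard simplex equals the deformed permutahedron
`{x : Σ_s x_s = z_α and Σ_{r ∈ R} x_r ≥ z_R for all nonempty R ⊆ α}`, where
`z_R = Σ_{∅ ≠ T ⊆ R} y_T`. -/
theorem minkowski_sum_eq_deformed_permutahedron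
    (α : Type*) [Fintype α] [DecidableEq α]
    (y : Finset α → ℝ) (hy : ∀ T : Finset α, T.Nonempty → 0 ≤ y T) :
    (∑ T ∈ Finset.univ.powerset.filter Finset.Nonempty, y T • simplexFace T)
      = {x : α → ℝ |
          (∑ s : α, x s)
            = (∑ T ∈ Finset.univ.powerset.filter Finset.Nonempty, y T) ∧
          ∀ R : Finset α, R.Nonempty →
            (∑ T ∈ R.powerset.filter Finset.Nonempty, y T) ≤ ∑ r ∈ R, x r} := by
  classical
  ext x
  simp only [Set.mem_setOf_eq]
  constructor
  · intro hx
    rw [Set.mem_finset_sum] at hx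
    obtain ⟨g, hg, hgx⟩ := hx
    have hgprops : ∀ T ∈ Finset.univ.powerset.filter Finset.Nonempty,
        (∀ s, 0 ≤ g T s) ∧ (∀ s ∉ T, g T s = 0) ∧ ∑ s, g T s = y T := by
      intro T hT
      have hTne : T.Nonempty := (Finset.mem_filter.mp hT).2
      exact (mem_smul_simplexFace hTne (hy T hTne)).mp (hg hT)
    have hxs : ∀ s, x s = ∑ T ∈ Finset.univ.powerset.filter Finset.Nonempty, g T s := by
      intro s
      rw [← hgx]
      exact (Finset.sum_apply s _ _)
    constructor
    · calc (∑ s : α, x s)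
          = ∑ s : α, ∑ T ∈ Finset.univ.powerset.filter Finset.Nonempty, g T s := by
            exact Finset.sum_congr rfl fun s _ => hxs s
        _ = ∑ T ∈ Finset.univ.powerset.filter Finset.Nonempty, ∑ s : α, g T s :=
            Finset.sum_comm
        _ = ∑ T ∈ Finset.univ.powerset.filter Finset.Nonempty, y T :=
            Finset.sum_congr rfl fun T hT => (hgprops T hT).2.2
    · intro R hR
      have hsub : R.powerset.filter Finset.Nonempty
          ⊆ Finset.univ.powerset.filter Finset.Nonempty :=
        Finset.filter_subset_filter _ (Finset.powerset_mono.mpr (Finset.subset_univ R))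
      calc (∑ T ∈ R.powerset.filter Finset.Nonempty, y T)
          = ∑ T ∈ R.powerset.filter Finset.Nonempty, ∑ r ∈ R, g T r := by
            apply Finset.sum_congr rfl
            intro T hT
            have hTR : T ⊆ R := Finset.mem_powerset.mp (Finset.mem_filter.mp hT).1
            have hTT : T ∈ Finset.univ.powerset.filter Finset.Nonempty := hsub hT
            rw [← (hgprops T hTT).2.2]
            exact (Finset.sum_subset (Finset.subset_univ R)
              (fun s _ hs => (hgprops T hTT).2.1 s (fun c => hs (hTR c)))).symm
        _ ≤ ∑ T ∈ Finset.univ.powerset.filter Finset.Nonempty, ∑ r ∈ R, g T r := by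
            apply Finset.sum_le_sum_of_subset_of_nonneg hsub
            intro T hT _
            have hTT : T.Nonempty := (Finset.mem_filter.mp hT).2
            exact Finset.sum_nonneg fun r _ => ((hgprops T hT).1 r)
        _ = ∑ r ∈ R, ∑ T ∈ Finset.univ.powerset.filter Finset.Nonempty, g T r :=
            Finset.sum_comm
        _ = ∑ r ∈ R, x r := Finset.sum_congr rfl fun r _ => (hxs r).symm
  · rintro ⟨heq, hineq⟩
    exact perm_subset_sum _ y hy rfl x heq hineq
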